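/- Let p be an odd prime. There exists a surjective map φ from the vertex set of the Farey graph G3(p) onto the set {0, 1, …, p} such that every fiber φ⁻¹(j) has exactly (p−1)/2 elements, and for every vertex v of G3(p), the restriction of φ to the set of neighbours of v is a bijection onto {0, 1, …, p} \ {φ(v)}. (In other words, G3(p) is a (p−1)/2-fold graph covering of the complete graph K_{p+1} on p+1 vertices.) -/

import Mathlib

/-- The equivalence relation identifying `(a,c)` with `(-a,-c)` on the set of pairs of
elements of `ℤ/nℤ` generating the unit ideal. -/
def FareySetoid (n : ℕ) : Setoid {p : ZMod n × ZMod n // IsCoprime p.1 p.2} where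
  r p q := p.1 = q.1 ∨ p.1 = -q.1
  iseqv := by
    constructor
    · intro p; exact Or.inl rfl
    · rintro p q (h | h)
      · exact Or.inl h.symm
      · right; rw [h, neg_neg]
    · rintro p q s (h1 | h1) (h2 | h2)
      · exact Or.inl (h1.trans h2)
      · right; rw [h1, h2]
      · right; rw [h1, h2]
      · left; rw [h1, h2, neg_neg]

/-- The vertices of the Farey graph `G3(n)`: classes `[a:c]` of pairs `(a,c) ∈ (ℤ/nℤ)²`
generating the unit ideal, with `(a,c) ~ (-a,-c)`. -/
def FareyVertex (n : ℕ) := Quotient (FareySetoid n)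

/-- The vertex `[a:c]` of the Farey graph. -/
def FareyVertex.mk (n : ℕ) (a c : ZMod n) (h : IsCoprime a c) : FareyVertex n :=
  Quotient.mk (FareySetoid n) ⟨(a, c), h⟩

/-- The Farey graph `G3(n)`: vertices `[a:c]` and `[b:d]` are adjacent iff
`ad - bc ≡ ±1 (mod n)`. -/
def FareyGraph (n : ℕ) : SimpleGraph (FareyVertex n) where
  Adj u v := u ≠ v ∧ ∃ a c b d : ZMod n,
    (∃ h, u = FareyVertex.mk n a c h) ∧ (∃ h, v = FareyVertex.mk n b d h) ∧
    (a * d - b * c = 1 ∨ a * d - b * c = -1)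
  symm := by
    constructor
    rintro u v ⟨hne, a, c, b, d, hu, hv, h⟩
    refine ⟨hne.symm, b, d, a, c, hv, hu, ?_⟩
    rcases h with h | h
    · right; linear_combination -h
    · left; linear_combination -h
  loopless := ⟨fun u h => h.1 rfl⟩

instance (n : ℕ) [NeZero n] : Finite (FareyVertex n) := Quotient.finite _

/-- A pair of integers `b, d` with `gcd(b, d, n) = 1` yields a pair generating the unit
ideal of `ℤ/nℤ`. -/
lemma isCoprime_zmod_of_gcd {n : ℕ} {b d : ℤ} (h : Int.gcd b (Int.gcd d n) = 1) :
    IsCoprime (b : ZMod n) (d : ZMod n) := by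
  obtain ⟨u, v, huv⟩ := Int.isCoprime_iff_gcd_eq_one.mpr h
  have hgcd : ((Int.gcd d n : ℕ) : ℤ) = d * Int.gcdA d n + n * Int.gcdB d n :=
    Int.gcd_eq_gcd_ab d (n : ℤ)
  refine ⟨(u : ZMod n), ((v * Int.gcdA d (n : ℤ) : ℤ) : ZMod n), ?_⟩
  have huv' : u * b + (v * Int.gcdA d (n : ℤ)) * d + (v * Int.gcdB d (n : ℤ)) * n = 1 := by
    rw [← huv, hgcd]; ring
  have := congrArg (fun z : ℤ => (z : ZMod n)) huv'
  push_cast at this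
  rw [ZMod.natCast_self] at this
  push_cast
  linear_combination this
/-- The vertex `[b:d]` of `G3(n)` determined by integers `b`, `d` with `gcd(b,d,n) = 1`. -/
def FareyVertex.ofInt (n : ℕ) (b d : ℤ) (h : Int.gcd b (Int.gcd d n) = 1) : FareyVertex n :=
  FareyVertex.mk n (b : ZMod n) (d : ZMod n) (isCoprime_zmod_of_gcd h)

/-- The number of vertices of the Farey graph `G3(n)`. -/
noncomputable def fareyCard (n : ℕ) : ℕ := Nat.card (FareyVertex n)

/-- The characteristic polynomial of the (real) adjacency matrix of the Farey
graph `G3(n)` (junk value `1` for `n = 0`). -/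
noncomputable def fareyCharpoly (n : ℕ) : Polynomial ℝ :=
  if h : n = 0 then 1
  else
    letI : NeZero n := ⟨h⟩
    letI : Fintype (FareyVertex n) := Fintype.ofFinite _
    letI : DecidableEq (FareyVertex n) := Classical.decEq _
    letI : DecidableRel (FareyGraph n).Adj := Classical.decRel _
    Matrix.charpoly ((FareyGraph n).adjMatrix ℝ)

/-- The spectrum of the Farey graph `G3(n)`: the multiset of real roots, with
multiplicity, of the characteristic polynomial of its adjacency matrix. -/
noncomputable def sp3 (n : ℕ) : Multiset ℝ := (fareyCharpoly n).roots

section Aux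

variable {p : ℕ} [Fact p.Prime]

lemma farey_coprime_left {a c : ZMod p} (ha : a ≠ 0) : IsCoprime a c :=
  ⟨a⁻¹, 0, by field_simp; ring⟩

lemma farey_coprime_right {a c : ZMod p} (hc : c ≠ 0) : IsCoprime a c :=
  ⟨0, c⁻¹, by field_simp; ring⟩

lemma farey_ne_zero {a c : ZMod p} (h : IsCoprime a c) (ha : a = 0) : c ≠ 0 := by
  rintro rfl
  subst ha
  exact not_isUnit_zero (isCoprime_zero_right.mp h)

lemma farey_ne_zero' {a c : ZMod p} (h : IsCoprime a c) (hc : c = 0) : a ≠ 0 := by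
  rintro rfl
  subst hc
  exact not_isUnit_zero (isCoprime_zero_right.mp h)

lemma farey_mk_eq_mk {a c b d : ZMod p} {h1 : IsCoprime a c} {h2 : IsCoprime b d} :
    FareyVertex.mk p a c h1 = FareyVertex.mk p b d h2 ↔
      (a = b ∧ c = d) ∨ (a = -b ∧ c = -d) := by
  constructor
  · intro h
    have := Quotient.exact h
    rcases this with h | h
    · exact Or.inl ⟨congrArg Prod.fst h, congrArg Prod.snd h⟩
    · exact Or.inr ⟨congrArg Prod.fst h, congrArg Prod.snd h⟩
  · rintro (⟨ha, hc⟩ | ⟨ha, hc⟩)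
    · exact Quotient.sound (Or.inl (by simp [Prod.ext_iff, ha, hc]))
    · exact Quotient.sound (Or.inr (by simp [Prod.ext_iff, ha, hc]))

/-- The projection map. -/
def fphiAux (x : {q : ZMod p × ZMod p // IsCoprime q.1 q.2}) : Fin (p + 1) :=
  if x.1.2 = 0 then ⟨p, lt_add_one p⟩
  else ⟨(x.1.1 / x.1.2).val, (ZMod.val_lt _).trans (lt_add_one p)⟩

def fphi : FareyVertex p → Fin (p + 1) :=
  Quotient.lift fphiAux (by
    rintro ⟨⟨a, c⟩, h1⟩ ⟨⟨b, d⟩, h2⟩ (h | h) <;>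
      obtain ⟨rfl, rfl⟩ : _ ∧ _ := ⟨congrArg Prod.fst h, congrArg Prod.snd h⟩
    · rfl
    · simp [fphiAux, neg_eq_zero, neg_div_neg_eq])

lemma fphi_mk_zero {a : ZMod p} (h : IsCoprime a 0) :
    fphi (FareyVertex.mk p a 0 h) = ⟨p, lt_add_one p⟩ := by
  simp [fphi, FareyVertex.mk, fphiAux]

lemma fphi_mk_ne {a c : ZMod p} (h : IsCoprime a c) (hc : c ≠ 0) :
    fphi (FareyVertex.mk p a c h) =
      ⟨(a / c).val, (ZMod.val_lt _).trans (lt_add_one p)⟩ := by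
  simp [fphi, FareyVertex.mk, fphiAux, hc]

/-- Key: `fphi` identifies classes iff determinant vanishes. -/
lemma fphi_eq_iff {a c b d : ZMod p} (h1 : IsCoprime a c) (h2 : IsCoprime b d) :
    fphi (FareyVertex.mk p a c h1) = fphi (FareyVertex.mk p b d h2) ↔ a * d = b * c := by
  by_cases hc : c = 0 <;> by_cases hd : d = 0
  · subst hc hd
    simp [fphi_mk_zero]
  · subst hc
    rw [fphi_mk_zero, fphi_mk_ne h2 hd]
    constructor
    · intro h
      exact absurd (congrArg Fin.val h) (ZMod.val_lt (b / d)).ne'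
    · intro h
      have ha : a ≠ 0 := farey_ne_zero' h1 rfl
      exact (mul_ne_zero ha hd (by simpa using h)).elim
  · subst hd
    rw [fphi_mk_ne h1 hc, fphi_mk_zero]
    constructor
    · intro h
      exact absurd (congrArg Fin.val h) (ZMod.val_lt (a / c)).ne
    · intro h
      have hb : b ≠ 0 := farey_ne_zero' h2 rfl
      exact (mul_ne_zero hb hc (by simpa using h.symm)).elim
  · rw [fphi_mk_ne h1 hc, fphi_mk_ne h2 hd]
    rw [Fin.mk.injEq]
    constructor
    · intro h
      have : a / c = b / d := by
        have := congrArg (Nat.cast : ℕ → ZMod p) h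
        rwa [ZMod.natCast_rightInverse _, ZMod.natCast_rightInverse _] at this
      rw [div_eq_div_iff hc hd] at this
      exact this
    · intro h
      congr 1
      rw [div_eq_div_iff hc hd]
      exact h

lemma farey_adj_iff {a c b d : ZMod p} (h1 : IsCoprime a c) (h2 : IsCoprime b d) :
    (FareyGraph p).Adj (FareyVertex.mk p a c h1) (FareyVertex.mk p b d h2) ↔
      (a * d - b * c = 1 ∨ a * d - b * c = -1) := by
  constructor
  · rintro ⟨hne, a', c', b', d', ⟨ha', hu⟩, ⟨hb', hv⟩, hdet⟩
    rw [farey_mk_eq_mk] at hu hv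
    rcases hu with ⟨ha, hc⟩ | ⟨ha, hc⟩ <;> rcases hv with ⟨hb, hd⟩ | ⟨hb, hd⟩ <;>
        subst ha <;> subst hc <;> subst hb <;> subst hd <;>
      rcases hdet with h | h <;>
      first
        | exact Or.inl (by linear_combination h)
        | exact Or.inr (by linear_combination h)
        | exact Or.inl (by linear_combination -h)
        | exact Or.inr (by linear_combination -h)
  · rintro hdet
    refine ⟨?_, a, c, b, d, ⟨h1, rfl⟩, ⟨h2, rfl⟩, hdet⟩
    intro heq
    rw [farey_mk_eq_mk] at heq
    have h0 : a * d - b * c = 0 := by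
      rcases heq with ⟨h, h'⟩ | ⟨h, h'⟩ <;> rw [h, h'] <;> ring
    rcases hdet with h | h <;> rw [h] at h0 <;> simp at h0

lemma farey_proportional {b d b' d' : ZMod p} (h : IsCoprime b d)
    (hdet : b * d' = b' * d) : ∃ s : ZMod p, b' = s * b ∧ d' = s * d := by
  obtain ⟨u, v, huv⟩ := h
  refine ⟨u * b' + v * d', ?_, ?_⟩
  · linear_combination -b' * huv - v * hdet
  · linear_combination -d' * huv + u * hdet

def fiberRep (j : Fin (p + 1)) (t : ZMod p) : ZMod p × ZMod p :=
  if (j : ℕ) = p then (t, 0) else (((j : ℕ) : ZMod p) * t, t)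

lemma fiberRep_coprime {j : Fin (p + 1)} {t : ZMod p} (ht : t ≠ 0) :
    IsCoprime (fiberRep j t).1 (fiberRep j t).2 := by
  unfold fiberRep
  split
  · exact farey_coprime_left ht
  · exact farey_coprime_right ht

def fiberVert (j : Fin (p + 1)) (t : ZMod p) (ht : t ≠ 0) : FareyVertex p :=
  FareyVertex.mk p (fiberRep j t).1 (fiberRep j t).2 (fiberRep_coprime ht)

lemma mk_congr {a c a' c' : ZMod p} (ha : a = a') (hc : c = c')
    (h : IsCoprime a c) (h' : IsCoprime a' c') :
    FareyVertex.mk p a c h = FareyVertex.mk p a' c' h' := by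
  subst ha; subst hc; exact Quotient.sound (Or.inl rfl)

lemma fin_val_lt_of_ne {j : Fin (p + 1)} (hj : (j : ℕ) ≠ p) : (j : ℕ) < p :=
  lt_of_le_of_ne (Nat.lt_succ_iff.mp j.isLt) hj

lemma fphi_fiberVert (j : Fin (p + 1)) (t : ZMod p) (ht : t ≠ 0) :
    fphi (fiberVert j t ht) = j := by
  by_cases hj : (j : ℕ) = p
  · rw [show fiberVert j t ht = FareyVertex.mk p t 0 (farey_coprime_left ht) from
      mk_congr (by simp [fiberRep, hj]) (by simp [fiberRep, hj]) _ _, fphi_mk_zero]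
    exact Fin.ext hj.symm
  · rw [show fiberVert j t ht =
        FareyVertex.mk p (((j : ℕ) : ZMod p) * t) t (farey_coprime_right ht) from
      mk_congr (by simp [fiberRep, hj]) (by simp [fiberRep, hj]) _ _, fphi_mk_ne _ ht]
    refine Fin.ext ?_
    show (((j : ℕ) : ZMod p) * t / t).val = (j : ℕ)
    rw [mul_div_cancel_right₀ _ ht, ZMod.val_cast_of_lt (fin_val_lt_of_ne hj)]

lemma fiberVert_eq_iff {j : Fin (p + 1)} {t t' : ZMod p} (ht : t ≠ 0) (ht' : t' ≠ 0) :
    fiberVert j t ht = fiberVert j t' ht' ↔ t = t' ∨ t = -t' := by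
  unfold fiberVert
  rw [farey_mk_eq_mk]
  unfold fiberRep
  split
  · simp
  · constructor
    · rintro (⟨_, h⟩ | ⟨_, h⟩)
      · exact Or.inl h
      · exact Or.inr (by simpa using h)
    · rintro (h | h)
      · exact Or.inl ⟨by rw [h], h⟩
      · exact Or.inr ⟨by rw [h]; ring, by simpa using h⟩

lemma fiber_mem {j : Fin (p + 1)} {x : FareyVertex p} (hx : fphi x = j) :
    ∃ t : ZMod p, ∃ ht : t ≠ 0, x = fiberVert j t ht := by
  induction x using Quotient.ind with
  | _ y =>
    obtain ⟨⟨a, c⟩, hac⟩ := y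
    rw [show (Quotient.mk (FareySetoid p) ⟨(a, c), hac⟩ : FareyVertex p)
        = FareyVertex.mk p a c hac from rfl] at hx ⊢
    by_cases hc : c = 0
    · subst hc
      have hj : (j : ℕ) = p := by
        rw [fphi_mk_zero hac] at hx
        exact (congrArg Fin.val hx).symm
      have ha : a ≠ 0 := farey_ne_zero' hac rfl
      refine ⟨a, ha, ?_⟩
      exact mk_congr (by simp [fiberRep, hj]) (by simp [fiberRep, hj]) _ _
    · have hval : (a / c).val = (j : ℕ) := by
        rw [fphi_mk_ne hac hc] at hx
        exact congrArg Fin.val hx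
      have hj : (j : ℕ) ≠ p := by
        rw [← hval]
        exact (ZMod.val_lt (a / c)).ne
      have key : a = ((j : ℕ) : ZMod p) * c := by
        have : a / c = ((j : ℕ) : ZMod p) := by
          rw [← hval, ZMod.natCast_rightInverse _]
        rwa [div_eq_iff hc] at this
      refine ⟨c, hc, ?_⟩
      exact mk_congr (by rw [key]; simp [fiberRep, hj]) (by simp [fiberRep, hj]) _ _

lemma farey_fiber_card (hodd : Odd p) (j : Fin (p + 1)) :
    Nat.card (fphi ⁻¹' {j} : Set (FareyVertex p)) = (p - 1) / 2 := by
  obtain ⟨k, hk⟩ := hodd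
  have h2 : 2 ≤ p := (Fact.out : p.Prime).two_le
  have hk1 : 1 ≤ k := by omega
  have hq : (p - 1) / 2 = k := by omega
  rw [hq]
  -- the forward map
  have hcast_ne : ∀ i : Fin k, ((((i : ℕ) + 1 : ℕ)) : ZMod p) ≠ 0 := by
    intro i hi
    rw [ZMod.natCast_eq_zero_iff] at hi
    have := Nat.le_of_dvd (Nat.succ_pos _) hi
    omega
  set F : Fin k → (fphi ⁻¹' {j} : Set (FareyVertex p)) := fun i =>
    ⟨fiberVert j _ (hcast_ne i), by
      simp only [Set.mem_preimage, Set.mem_singleton_iff, fphi_fiberVert]⟩ with hF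
  have hbij : Function.Bijective F := by
    constructor
    · intro i i' hii
      have := (fiberVert_eq_iff (hcast_ne i) (hcast_ne i')).mp (Subtype.ext_iff.mp hii)
      rcases this with h | h
      · have h1 : (((i : ℕ) + 1 : ℕ) : ZMod p).val = (((i' : ℕ) + 1 : ℕ) : ZMod p).val :=
          congrArg ZMod.val h
      -- values are small
        rw [ZMod.val_cast_of_lt (by omega), ZMod.val_cast_of_lt (by omega)] at h1
        exact Fin.ext (by omega)
      · exfalso
        have hsum : ((((i : ℕ) + 1) + ((i' : ℕ) + 1) : ℕ) : ZMod p) = 0 := by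
          push_cast
          push_cast at h
          rw [h]; ring
        rw [ZMod.natCast_eq_zero_iff] at hsum
        have := Nat.le_of_dvd (by omega) hsum
        have := i.isLt
        have := i'.isLt
        omega
    · rintro ⟨x, hx⟩
      have hx' : fphi x = j := hx
      obtain ⟨t, ht, rfl⟩ := fiber_mem hx'
      have htval1 : 1 ≤ t.val := Nat.one_le_iff_ne_zero.mpr (fun h0 => ht (by
        have := congrArg (Nat.cast : ℕ → ZMod p) h0
        rw [ZMod.natCast_rightInverse t] at this
        simpa using this))
      have htvallt : t.val < p := ZMod.val_lt t
      by_cases hm : t.val ≤ k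
      · refine ⟨⟨t.val - 1, by omega⟩, Subtype.ext ?_⟩
        show fiberVert j (((t.val - 1) + 1 : ℕ) : ZMod p) (hcast_ne ⟨t.val - 1, by omega⟩)
            = fiberVert j t ht
        refine (fiberVert_eq_iff _ _).mpr (Or.inl ?_)
        rw [show (t.val - 1) + 1 = t.val by omega]
        exact ZMod.natCast_rightInverse t
      · refine ⟨⟨(p - t.val) - 1, by omega⟩, Subtype.ext ?_⟩
        show fiberVert j ((((p - t.val) - 1) + 1 : ℕ) : ZMod p)
            (hcast_ne ⟨(p - t.val) - 1, by omega⟩) = fiberVert j t ht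
        refine (fiberVert_eq_iff _ _).mpr (Or.inr ?_)
        rw [show ((p - t.val) - 1) + 1 = p - t.val by omega]
        have hcs : ((p - t.val : ℕ) : ZMod p) = ((p : ℕ) : ZMod p) - ((t.val : ℕ) : ZMod p) :=
          Nat.cast_sub htvallt.le
        rw [hcs, ZMod.natCast_self, ZMod.natCast_rightInverse t, zero_sub]
  rw [← Nat.card_eq_of_bijective F hbij, Nat.card_eq_fintype_card, Fintype.card_fin]

end Aux

/-- For an odd prime `p`, the Farey graph `G3(p)` is a `(p-1)/2`-fold
graph covering of the complete graph `K_{p+1}`: there is a surjection `φ` from the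
vertices of `G3(p)` onto `{0, 1, …, p}` all of whose fibers have `(p-1)/2` elements,
such that for every vertex `v`, `φ` restricts to a bijection from the neighbours of `v`
onto the complement of `{φ v}`. -/
theorem stmt5 (p : ℕ) (hp : p.Prime) (hodd : Odd p) :
    ∃ φ : FareyVertex p → Fin (p + 1),
      Function.Surjective φ ∧
      (∀ j : Fin (p + 1), Nat.card (φ ⁻¹' {j}) = (p - 1) / 2) ∧
      (∀ v : FareyVertex p, Set.BijOn φ ((FareyGraph p).neighborSet v) {φ v}ᶜ) := by
  haveI : Fact p.Prime := ⟨hp⟩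
  refine ⟨fphi, fun j => ⟨fiberVert j 1 one_ne_zero, fphi_fiberVert j 1 one_ne_zero⟩,
    fun j => farey_fiber_card hodd j, ?_⟩
  intro v
  induction v using Quotient.ind with
  | _ y =>
  obtain ⟨⟨a, c⟩, hac⟩ := y
  have hac2 : IsCoprime a c := hac
  rw [show (Quotient.mk (FareySetoid p) ⟨(a, c), hac⟩ : FareyVertex p)
      = FareyVertex.mk p a c hac2 from rfl]
  refine ⟨?_, ?_, ?_⟩
  · -- MapsTo
    intro w hw
    induction w using Quotient.ind with
    | _ z =>
    obtain ⟨⟨b, d⟩, hbd⟩ := z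
    have hbd2 : IsCoprime b d := hbd
    rw [show (Quotient.mk (FareySetoid p) ⟨(b, d), hbd⟩ : FareyVertex p)
        = FareyVertex.mk p b d hbd2 from rfl] at hw ⊢
    have hadj := (farey_adj_iff hac2 hbd2).mp hw
    intro heq
    have hdet0 : a * d = b * c :=
      (fphi_eq_iff hac2 hbd2).mp (Set.mem_singleton_iff.mp heq).symm
    rcases hadj with h | h <;> rw [sub_eq_zero.mpr hdet0] at h <;> simp at h
  · -- InjOn
    intro w1 hw1 w2 hw2 heq
    induction w1 using Quotient.ind with
    | _ z1 =>
    induction w2 using Quotient.ind with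
    | _ z2 =>
    obtain ⟨⟨b, d⟩, hbd⟩ := z1
    obtain ⟨⟨b', d'⟩, hbd'⟩ := z2
    have hbd2 : IsCoprime b d := hbd
    have hbd2' : IsCoprime b' d' := hbd'
    rw [show (Quotient.mk (FareySetoid p) ⟨(b, d), hbd⟩ : FareyVertex p)
        = FareyVertex.mk p b d hbd2 from rfl] at hw1 heq ⊢
    rw [show (Quotient.mk (FareySetoid p) ⟨(b', d'), hbd'⟩ : FareyVertex p)
        = FareyVertex.mk p b' d' hbd2' from rfl] at hw2 heq ⊢
    have hdet1 := (farey_adj_iff hac2 hbd2).mp hw1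
    have hdet2 := (farey_adj_iff hac2 hbd2').mp hw2
    have hprop : b * d' = b' * d := (fphi_eq_iff hbd2 hbd2').mp heq
    obtain ⟨s, hb0, hd0⟩ := farey_proportional hbd2 hprop
    have hb2 : b' = s * b := hb0
    have hd2 : d' = s * d := hd0
    have hD : a * d' - b' * c = s * (a * d - b * c) := by rw [hb2, hd2]; ring
    have hs : s = 1 ∨ s = -1 := by
      rcases hdet1 with h1 | h1 <;> rcases hdet2 with h2 | h2
      · left; linear_combination -hD - s * h1 + h2
      · right; linear_combination -hD - s * h1 + h2
      · right; linear_combination hD + s * h1 - h2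
      · left; linear_combination hD + s * h1 - h2
    rcases hs with rfl | rfl
    · rw [farey_mk_eq_mk]; exact Or.inl ⟨by rw [hb2, one_mul], by rw [hd2, one_mul]⟩
    · rw [farey_mk_eq_mk]
      exact Or.inr ⟨by rw [hb2]; ring, by rw [hd2]; ring⟩
  · -- SurjOn
    intro j hj
    have hj' : j ≠ fphi (FareyVertex.mk p a c hac2) := hj
    by_cases hjp : (j : ℕ) = p
    · have hc : c ≠ 0 := by
        intro hc0
        subst hc0
        exact hj' (Fin.ext (by rw [fphi_mk_zero hac2]; exact hjp))
      have ht : (-c⁻¹ : ZMod p) ≠ 0 := by simp [hc]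
      refine ⟨fiberVert j _ ht, ?_, fphi_fiberVert j _ ht⟩
      rw [SimpleGraph.mem_neighborSet,
        show fiberVert j _ ht = FareyVertex.mk p (-c⁻¹) 0 (farey_coprime_left ht) from
          mk_congr (by simp [fiberRep, hjp]) (by simp [fiberRep, hjp]) _ _,
        farey_adj_iff]
      left
      field_simp
      ring
    · set jK : ZMod p := ((j : ℕ) : ZMod p) with hjK
      have hne : a - jK * c ≠ 0 := by
        intro h0
        apply hj'
        have h1 : a = jK * c := by linear_combination h0
        have h2 : fphi (FareyVertex.mk p a c hac2)
            = fphi (FareyVertex.mk p jK 1 (farey_coprime_right one_ne_zero)) :=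
          (fphi_eq_iff hac2 _).mpr (by rw [h1]; ring)
        rw [h2, fphi_mk_ne _ one_ne_zero]
        refine Fin.ext ?_
        show (j : ℕ) = (jK / 1).val
        rw [div_one, hjK, ZMod.val_cast_of_lt (fin_val_lt_of_ne hjp)]
      have ht : ((a - jK * c)⁻¹ : ZMod p) ≠ 0 := inv_ne_zero hne
      refine ⟨fiberVert j _ ht, ?_, fphi_fiberVert j _ ht⟩
      rw [SimpleGraph.mem_neighborSet,
        show fiberVert j _ ht
            = FareyVertex.mk p (jK * (a - jK * c)⁻¹) ((a - jK * c)⁻¹)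
              (farey_coprime_right ht) from
          mk_congr (by simp [fiberRep, hjp, hjK]) (by simp [fiberRep, hjp]) _ _,
        farey_adj_iff]
      left
      rw [show a * (a - jK * c)⁻¹ - jK * (a - jK * c)⁻¹ * c
          = (a - jK * c) * (a - jK * c)⁻¹ by ring, mul_inv_cancel₀ hne]
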